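/- arXiv:2212.11195 — 2 statements merged into one kernel-verified Lean document; each statement's English description precedes it below -/
import Mathlib

section
/- Let ν > 0, D > 0, μ_a > 0, μ_t > 0, v ≥ 0 and S₀ ∈ ℝ. Set ζ = ν·(D·μ_t² − μ_a) and assume ζ + μ_t·v ≠ 0. Then the function φ(z,t) = (ν·S₀·exp(−μ_t·z)/(ζ + μ_t·v))·exp(ζ·t)·(1 − exp(−(ζ + μ_t·v)·t)) satisfies (1/ν)·∂φ/∂t − D·∂²φ/∂z² + μ_a·φ = S₀·exp(−μ_t·(z + v·t)) for all z ∈ ℝ, t ∈ ℝ, with φ(z,0) = 0. -/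
private lemma hexp (c x : ℝ) :
    HasDerivAt (fun y : ℝ => Real.exp (c * y)) (c * Real.exp (c * x)) x := by
  simpa [mul_comm, Function.comp_def] using (Real.hasDerivAt_exp (c * x)).comp x
    ((hasDerivAt_id x).const_mul c)

/-- With `ζ = ν·(D·μt² − μa)` and `ζ + μt·v ≠ 0`, the function
`φ(z,t) = (ν·S₀·exp(−μt·z)/(ζ + μt·v))·exp(ζ·t)·(1 − exp(−(ζ + μt·v)·t))`
solves `(1/ν)·∂ₜφ − D·∂_zz φ + μa·φ = S₀·exp(−μt·(z + v·t))` with `φ(z,0) = 0`. -/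
theorem fluence_rate_parabolic_solution (ν D μa μt v S₀ : ℝ)
    (hν : 0 < ν) (hD : 0 < D) (hμa : 0 < μa) (hμt : 0 < μt) (hv : 0 ≤ v)
    (ζ : ℝ) (hζ : ζ = ν * (D * μt ^ 2 - μa)) (hden : ζ + μt * v ≠ 0)
    (φ : ℝ → ℝ → ℝ)
    (hφ : φ = fun z t => (ν * S₀ * Real.exp (-μt * z) / (ζ + μt * v)) *
      Real.exp (ζ * t) * (1 - Real.exp (-(ζ + μt * v) * t))) :
    (∀ z t : ℝ,
      (1 / ν) * deriv (fun τ => φ z τ) t - D * deriv (deriv (fun ξ => φ ξ t)) z +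
        μa * φ z t = S₀ * Real.exp (-μt * (z + v * t))) ∧
    (∀ z : ℝ, φ z 0 = 0) := by
  subst hφ
  set A : ℝ := ζ + μt * v with hA
  constructor
  · intro z t
    -- time derivative
    set C : ℝ := ν * S₀ * Real.exp (-μt * z) / A with hC
    have ht : HasDerivAt (fun τ => C * Real.exp (ζ * τ) * (1 - Real.exp (-A * τ)))
        (C * (ζ * Real.exp (ζ * t) * (1 - Real.exp (-A * t)) +
          Real.exp (ζ * t) * (A * Real.exp (-A * t)))) t := by
      have h1 := hexp ζ t
      have h2 : HasDerivAt (fun τ : ℝ => 1 - Real.exp (-A * τ))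
          (-(-A * Real.exp (-A * t))) t := (hexp (-A) t).const_sub 1
      exact HasDerivAt.congr_deriv ((h1.const_mul C).mul h2) (by ring)
    have hdt : deriv (fun τ => C * Real.exp (ζ * τ) * (1 - Real.exp (-A * τ))) t
        = C * (ζ * Real.exp (ζ * t) * (1 - Real.exp (-A * t)) +
          Real.exp (ζ * t) * (A * Real.exp (-A * t))) := ht.deriv
    -- space derivatives
    set K : ℝ := ν * S₀ / A * Real.exp (ζ * t) * (1 - Real.exp (-A * t)) with hK
    have hgeq : (fun ξ => ν * S₀ * Real.exp (-μt * ξ) / A * Real.exp (ζ * t) *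
        (1 - Real.exp (-A * t))) = fun ξ => Real.exp (-μt * ξ) * K := by
      funext ξ; rw [hK]; ring
    have hz : ∀ x : ℝ, HasDerivAt (fun ξ => ν * S₀ * Real.exp (-μt * ξ) / A *
        Real.exp (ζ * t) * (1 - Real.exp (-A * t)))
        (-μt * (Real.exp (-μt * x) * K)) x := by
      intro x
      rw [hgeq]
      simpa [mul_assoc, mul_comm, mul_left_comm] using (hexp (-μt) x).mul_const K
    have hd1 : deriv (fun ξ => ν * S₀ * Real.exp (-μt * ξ) / A * Real.exp (ζ * t) *
        (1 - Real.exp (-A * t))) = fun x => -μt * (Real.exp (-μt * x) * K) := by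
      funext x; exact (hz x).deriv
    have hd2 : deriv (deriv (fun ξ => ν * S₀ * Real.exp (-μt * ξ) / A *
        Real.exp (ζ * t) * (1 - Real.exp (-A * t)))) z
        = -μt * (-μt * (Real.exp (-μt * z) * K)) := by
      rw [hd1]
      have : HasDerivAt (fun x => -μt * (Real.exp (-μt * x) * K))
          (-μt * (-μt * (Real.exp (-μt * z) * K))) z := by
        simpa [mul_assoc, mul_comm, mul_left_comm] using
          (((hexp (-μt) z).mul_const K).const_mul (-μt))
      exact this.deriv
    simp only [hdt, hd2]
    rw [← hC, hdt]
    -- algebra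
    have hrhs : Real.exp (-μt * (z + v * t)) =
        Real.exp (-μt * z) * (Real.exp (ζ * t) * Real.exp (-A * t)) := by
      rw [← Real.exp_add, ← Real.exp_add]
      congr 1
      rw [hA]; ring
    rw [hrhs, hC, hK, hA]
    have hν' : ν ≠ 0 := ne_of_gt hν
    have hA' : ζ + μt * v ≠ 0 := hden
    field_simp
    rw [hζ]
    ring
  · intro z
    simp
end

section
/- Let k > 0, ρ_b·c_b > 0, μ > 0, u ≥ 0, v ≥ 0 with μ·(u+v) > 0 or k·μ² > 0 (so the denominator is nonzero). Set ζ = k·μ²/(ρ_b·c_b) + u·μ and q(z,t) = C·exp(−μ·(z + v·t)) for a constant C. Then T(z,t) = T_b + C·exp(−μ·z)·(exp(ζ·t) − exp(−μ·v·t))/(k·μ² + ρ_b·c_b·μ·(u+v)) satisfies ρ_b·c_b·(∂T/∂t + u·∂T/∂z) = k·∂²T/∂z² + q(z,t) for all z, t, with T(z,0) = T_b. -/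
private lemma exp_mul_hasDerivAt (b t : ℝ) :
    HasDerivAt (fun s : ℝ => Real.exp (b * s)) (b * Real.exp (b * t)) t := by
  simpa [mul_comm, Function.comp_def] using (Real.hasDerivAt_exp (b * t)).comp t ((hasDerivAt_id t).const_mul b)

/-- With `ζ = k·μ²/(ρb·cb) + u·μ`, the function
`T(z,t) = T_b + C·exp(−μ·z)·(exp(ζ·t) − exp(−μ·v·t))/(k·μ² + ρb·cb·μ·(u+v))`
solves the 1-D convective heat equation
`ρb·cb·(∂ₜT + u·∂_z T) = k·∂_zz T + C·exp(−μ·(z+v·t))` with `T(z,0) = T_b`. -/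
theorem lumen_convective_heat_solution (k ρb cb μ u v C Tb : ℝ)
    (hk : 0 < k) (hρc : 0 < ρb * cb) (hμ : 0 < μ) (hu : 0 ≤ u) (hv : 0 ≤ v)
    (ζ : ℝ) (hζ : ζ = k * μ ^ 2 / (ρb * cb) + u * μ)
    (T : ℝ → ℝ → ℝ)
    (hT : T = fun z t => Tb + C * Real.exp (-μ * z) *
      (Real.exp (ζ * t) - Real.exp (-μ * v * t)) /
      (k * μ ^ 2 + ρb * cb * μ * (u + v))) :
    (∀ z t : ℝ,
      ρb * cb * (deriv (fun τ => T z τ) t + u * deriv (fun ξ => T ξ t) z) =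
        k * deriv (deriv (fun ξ => T ξ t)) z + C * Real.exp (-μ * (z + v * t))) ∧
    (∀ z : ℝ, T z 0 = Tb) := by
  have hD : (k * μ ^ 2 + ρb * cb * μ * (u + v)) ≠ 0 := by positivity
  subst hT
  constructor
  · intro z t
    set D := k * μ ^ 2 + ρb * cb * μ * (u + v) with hDdef
    -- time derivative
    have ht : deriv (fun τ => Tb + C * Real.exp (-μ * z) *
        (Real.exp (ζ * τ) - Real.exp (-μ * v * τ)) / D) t =
        C * Real.exp (-μ * z) *
          (ζ * Real.exp (ζ * t) - (-μ * v) * Real.exp (-μ * v * t)) / D := by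
      have : HasDerivAt (fun τ => Tb + C * Real.exp (-μ * z) *
          (Real.exp (ζ * τ) - Real.exp (-μ * v * τ)) / D)
          (C * Real.exp (-μ * z) *
            (ζ * Real.exp (ζ * t) - (-μ * v) * Real.exp (-μ * v * t)) / D) t := by
        have h := (((exp_mul_hasDerivAt ζ t).sub (exp_mul_hasDerivAt (-μ * v) t)).const_mul
          (C * Real.exp (-μ * z))).div_const D
        simpa [mul_assoc] using h.const_add Tb
      exact this.deriv
    -- first z derivative (as a function)
    have hzfun : ∀ t : ℝ, deriv (fun ξ => Tb + C * Real.exp (-μ * ξ) *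
        (Real.exp (ζ * t) - Real.exp (-μ * v * t)) / D) =
        fun ξ => C * (-μ * Real.exp (-μ * ξ)) *
          (Real.exp (ζ * t) - Real.exp (-μ * v * t)) / D := by
      intro t
      funext x
      have : HasDerivAt (fun ξ => Tb + C * Real.exp (-μ * ξ) *
          (Real.exp (ζ * t) - Real.exp (-μ * v * t)) / D)
          (C * (-μ * Real.exp (-μ * x)) *
            (Real.exp (ζ * t) - Real.exp (-μ * v * t)) / D) x := by
        have h := ((((exp_mul_hasDerivAt (-μ) x).const_mul C).mul_const
          (Real.exp (ζ * t) - Real.exp (-μ * v * t))).div_const D)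
        simpa using h.const_add Tb
      exact this.deriv
    -- second z derivative
    have hz2 : deriv (fun ξ => C * (-μ * Real.exp (-μ * ξ)) *
        (Real.exp (ζ * t) - Real.exp (-μ * v * t)) / D) z =
        C * (-μ * (-μ * Real.exp (-μ * z))) *
          (Real.exp (ζ * t) - Real.exp (-μ * v * t)) / D := by
      have h := (((((exp_mul_hasDerivAt (-μ) z).const_mul (-μ)).const_mul C).mul_const
        (Real.exp (ζ * t) - Real.exp (-μ * v * t))).div_const D)
      exact h.deriv
    simp only [ht, hzfun t, hz2]
    have hexp : Real.exp (-μ * (z + v * t)) = Real.exp (-μ * z) * Real.exp (-μ * v * t) := by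
      rw [← Real.exp_add]; ring_nf
    rw [hexp, hζ]
    have hρ0 : ρb ≠ 0 := left_ne_zero_of_mul hρc.ne'
    have hc0 : cb ≠ 0 := right_ne_zero_of_mul hρc.ne'
    field_simp
    rw [hDdef]
    ring
  · intro z
    simp
end
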